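/- For every positive integer n, the q-Catalan number Cat_n(q) = (1/[n+1]_q)·qbinom(2n,n) evaluated at q = −1 equals C(n, ⌊n/2⌋); that is, Cat_n(−1) = C(n, n/2) if n is even and C(n, (n−1)/2) if n is odd. -/

import Mathlib

open scoped Classical

noncomputable def qInt {K : Type*} [Field K] (q : K) (n : ℕ) : K :=
  ∑ i ∈ Finset.range n, q ^ i

noncomputable def qFact {K : Type*} [Field K] (q : K) (n : ℕ) : K :=
  ∏ i ∈ Finset.range n, qInt q (i + 1)

noncomputable def qBinom {K : Type*} [Field K] (q : K) (n k : ℕ) : K :=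
  qFact q n / (qFact q k * qFact q (n - k))

noncomputable def qCat {K : Type*} [Field K] (q : K) (n : ℕ) : K :=
  qBinom q (2 * n) n / qInt q (n + 1)

open Polynomial Finset

noncomputable def pInt (k : ℕ) : Polynomial ℚ := ∑ i ∈ range k, X ^ i
noncomputable def pFact (m : ℕ) : Polynomial ℚ := ∏ i ∈ range m, pInt (i + 1)
noncomputable def hpoly (k : ℕ) : Polynomial ℚ :=
  if Even k then ∑ i ∈ range (k / 2), X ^ (2 * i) else pInt k
noncomputable def Gpoly (m : ℕ) : Polynomial ℚ := ∏ i ∈ range m, hpoly (i + 1)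

lemma pInt_ne_zero {k : ℕ} (hk : 1 ≤ k) : pInt k ≠ 0 := by
  intro h
  have h3 : (0 : ℚ) = (k : ℚ) := by
    have := congrArg (Polynomial.eval (1 : ℚ)) h
    simpa [pInt] using this.symm
  have h2 : k = 0 := by exact_mod_cast h3.symm
  omega

lemma pFact_ne_zero (m : ℕ) : pFact m ≠ 0 :=
  Finset.prod_ne_zero_iff.2 fun i _ => pInt_ne_zero (Nat.le_add_left 1 i)

lemma algebraMap_pInt (k : ℕ) :
    algebraMap (Polynomial ℚ) (RatFunc ℚ) (pInt k) = qInt (RatFunc.X : RatFunc ℚ) k := by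
  simp [pInt, qInt, map_sum, map_pow, RatFunc.algebraMap_X]

lemma algebraMap_pFact (m : ℕ) :
    algebraMap (Polynomial ℚ) (RatFunc ℚ) (pFact m) = qFact (RatFunc.X : RatFunc ℚ) m := by
  simp [pFact, qFact, map_prod, ← algebraMap_pInt]

lemma qInt_X_ne_zero {k : ℕ} (hk : 1 ≤ k) : qInt (RatFunc.X : RatFunc ℚ) k ≠ 0 := by
  rw [← algebraMap_pInt]
  exact fun h => pInt_ne_zero hk (RatFunc.algebraMap_injective ℚ (by simpa using h))

lemma qFact_X_ne_zero (m : ℕ) : qFact (RatFunc.X : RatFunc ℚ) m ≠ 0 := by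
  rw [← algebraMap_pFact]
  exact fun h => pFact_ne_zero m (RatFunc.algebraMap_injective ℚ (by simpa using h))

lemma sum_even_split (m : ℕ) :
    (∑ i ∈ range (2 * m), (X : Polynomial ℚ) ^ i)
      = (1 + X) * ∑ i ∈ range m, X ^ (2 * i) := by
  induction m with
  | zero => simp
  | succ m ih =>
    have h2 : 2 * (m + 1) = (2 * m) + 1 + 1 := by ring
    rw [h2, Finset.sum_range_succ, Finset.sum_range_succ, ih, Finset.sum_range_succ]
    ring

lemma pInt_even {k : ℕ} (hk : Even k) : pInt k = (1 + X) * hpoly k := by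
  obtain ⟨j, hj⟩ := hk
  have hjk : k = 2 * j := by omega
  have hk2 : k / 2 = j := by omega
  rw [hpoly, if_pos ⟨j, hj⟩, hk2, pInt, hjk, sum_even_split]

lemma pFact_eq (m : ℕ) : pFact m = (1 + X) ^ (m / 2) * Gpoly m := by
  induction m with
  | zero => simp [pFact, Gpoly]
  | succ m ih =>
    have hpf : pFact (m + 1) = pFact m * pInt (m + 1) := Finset.prod_range_succ _ _
    have hG : Gpoly (m + 1) = Gpoly m * hpoly (m + 1) := Finset.prod_range_succ _ _
    by_cases he : Even (m + 1)
    · have hd : (m + 1) / 2 = m / 2 + 1 := by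
        obtain ⟨j, hj⟩ := he; omega
      rw [hpf, ih, pInt_even he, hG, hd, pow_succ]
      ring
    · have hd : (m + 1) / 2 = m / 2 := by
        rw [Nat.even_add_one, not_not] at he
        obtain ⟨j, hj⟩ := he; omega
      rw [hpf, ih, hG, hd, hpoly, if_neg he]
      ring

lemma Gpoly_eval (m : ℕ) : (Gpoly m).eval (-1) = ((m / 2).factorial : ℚ) := by
  induction m with
  | zero => simp [Gpoly]
  | succ m ih =>
    have hG : Gpoly (m + 1) = Gpoly m * hpoly (m + 1) := Finset.prod_range_succ _ _
    rw [hG, eval_mul, ih]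
    by_cases he : Even (m + 1)
    · have hd : (m + 1) / 2 = m / 2 + 1 := by
        obtain ⟨j, hj⟩ := he; omega
      have hev : (hpoly (m + 1)).eval (-1) = (((m + 1) / 2 : ℕ) : ℚ) := by
        rw [hpoly, if_pos he]
        simp [eval_finset_sum, pow_mul]
      rw [hev, hd, Nat.factorial_succ]
      push_cast
      ring
    · have hd : (m + 1) / 2 = m / 2 := by
        rw [Nat.even_add_one, not_not] at he
        obtain ⟨j, hj⟩ := he; omega
      have hev : (hpoly (m + 1)).eval (-1) = 1 := by
        rw [hpoly, if_neg he, pInt]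
        simp only [eval_finset_sum, eval_pow, eval_X]
        rw [neg_one_geom_sum, if_neg he]
      rw [hev, hd, mul_one]

theorem qCatalan_at_neg_one (n : ℕ) (hn : 1 ≤ n)
    (P : Polynomial ℚ)
    (hP : algebraMap (Polynomial ℚ) (RatFunc ℚ) P = qCat (RatFunc.X : RatFunc ℚ) n) :
    P.eval (-1 : ℚ) = (n.choose (n / 2) : ℚ) := by
  set A := algebraMap (Polynomial ℚ) (RatFunc ℚ)
  -- Step 1: polynomial identity P * pFact (n+1) * pFact n = pFact (2n)
  have hsub : 2 * n - n = n := by omega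
  have hFsucc : qFact (RatFunc.X : RatFunc ℚ) (n + 1)
      = qFact (RatFunc.X : RatFunc ℚ) n * qInt (RatFunc.X : RatFunc ℚ) (n + 1) :=
    Finset.prod_range_succ _ _
  have hkey : A P * (qFact (RatFunc.X : RatFunc ℚ) (n + 1) * qFact (RatFunc.X : RatFunc ℚ) n)
      = qFact (RatFunc.X : RatFunc ℚ) (2 * n) := by
    rw [hP, qCat, qBinom, hsub, hFsucc]
    field_simp [qFact_X_ne_zero, qInt_X_ne_zero (Nat.le_add_left 1 n)]
  have hpoly_id : P * (pFact (n + 1) * pFact n) = pFact (2 * n) := by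
    apply RatFunc.algebraMap_injective ℚ
    rw [map_mul, map_mul, algebraMap_pFact, algebraMap_pFact, algebraMap_pFact]
    exact hkey
  -- Step 2: cancel (1+X)^n
  have hexp : (n + 1) / 2 + n / 2 = n := by omega
  have hG_id : P * (Gpoly (n + 1) * Gpoly n) = Gpoly (2 * n) := by
    have h1 : (1 + (X : Polynomial ℚ)) ^ n * (P * (Gpoly (n + 1) * Gpoly n))
        = (1 + X) ^ n * Gpoly (2 * n) := by
      have := hpoly_id
      rw [pFact_eq, pFact_eq, pFact_eq] at this
      have h2n : 2 * n / 2 = n := by omega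
      rw [h2n] at this
      have hpow : (1 + (X : Polynomial ℚ)) ^ ((n + 1) / 2) * (1 + X) ^ (n / 2)
          = (1 + X) ^ n := by rw [← pow_add, hexp]
      rw [← this, ← hpow]
      ring
    have hne : ((1 : Polynomial ℚ) + X) ^ n ≠ 0 := by
      apply pow_ne_zero
      intro h
      have := congrArg (Polynomial.eval 0) h
      simp at this
    exact mul_left_cancel₀ hne h1
  -- Step 3: evaluate at -1
  have hev := congrArg (Polynomial.eval (-1 : ℚ)) hG_id
  rw [eval_mul, eval_mul, Gpoly_eval, Gpoly_eval, Gpoly_eval] at hev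
  have h2n : 2 * n / 2 = n := by omega
  rw [h2n] at hev
  -- hev : P.eval (-1) * (((n+1)/2)! * ((n/2)!)) = n !
  have hch := Nat.choose_mul_factorial_mul_factorial (Nat.div_le_self n 2)
  have hsub2 : n - n / 2 = (n + 1) / 2 := by omega
  rw [hsub2] at hch
  have hchQ : (n.choose (n / 2) : ℚ) * (n / 2).factorial * ((n + 1) / 2).factorial
      = (n.factorial : ℚ) := by exact_mod_cast congrArg (Nat.cast : ℕ → ℚ) hch
  have hf1 : ((((n + 1) / 2).factorial : ℚ)) ≠ 0 := by
    exact_mod_cast Nat.factorial_ne_zero _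
  have hf2 : (((n / 2).factorial : ℚ)) ≠ 0 := by
    exact_mod_cast Nat.factorial_ne_zero _
  have : P.eval (-1) * (((n + 1) / 2).factorial * ((n / 2).factorial : ℚ))
      = (n.choose (n / 2) : ℚ) * (((n + 1) / 2).factorial * ((n / 2).factorial : ℚ)) := by
    rw [hev, ← hchQ]; ring
  exact mul_right_cancel₀ (by positivity) this
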